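/- For the complete graph K_n, the Sombor index of its m-splitting graph is (n(n-1)²/√2)·(m√(2m²+4m+4) + (m+1)). -/

import Mathlib

open Finset Matrix Polynomial Kronecker

noncomputable def somborIndex {V : Type*} [Fintype V] [DecidableEq V]
    (G : SimpleGraph V) [DecidableRel G.Adj] : ℝ :=
  ∑ e ∈ G.edgeFinset,
    Sym2.lift ⟨fun u v => Real.sqrt ((G.degree u : ℝ) ^ 2 + (G.degree v : ℝ) ^ 2),
      fun u v => by simp [add_comm]⟩ e

/-- The `m`-splitting graph: vertices `(v, 0)` are the original vertices, and
`(v, j)` for `j ≠ 0` are the `m` added copies of `v`, adjacent to the neighbors of `v`. -/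
def splittingGraph {V : Type*} (G : SimpleGraph V) (m : ℕ) :
    SimpleGraph (V × Fin (m + 1)) where
  Adj p q := G.Adj p.1 q.1 ∧ (p.2 = 0 ∨ q.2 = 0)
  symm := ⟨fun p q h => ⟨h.1.symm, h.2.symm⟩⟩
  loopless := ⟨fun p h => G.irrefl h.1⟩

instance {V : Type*} (G : SimpleGraph V) [DecidableRel G.Adj] (m : ℕ) :
    DecidableRel (splittingGraph G m).Adj :=
  fun _ _ => inferInstanceAs (Decidable (_ ∧ _))

/-- The `m`-shadow graph: `m` copies of `G`, with each vertex joined to the neighbors of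
the corresponding vertex in every copy. -/
def shadowGraph {V : Type*} (G : SimpleGraph V) (m : ℕ) :
    SimpleGraph (V × Fin m) where
  Adj p q := G.Adj p.1 q.1
  symm := ⟨fun _ _ h => h.symm⟩
  loopless := ⟨fun p h => G.irrefl h⟩

instance {V : Type*} (G : SimpleGraph V) [DecidableRel G.Adj] (m : ℕ) :
    DecidableRel (shadowGraph G m).Adj :=
  fun p q => inferInstanceAs (Decidable (G.Adj p.1 q.1))

noncomputable def somborMatrix {V : Type*} [Fintype V] [DecidableEq V]
    (G : SimpleGraph V) [DecidableRel G.Adj] : Matrix V V ℝ :=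
  Matrix.of fun u v =>
    if G.Adj u v then Real.sqrt ((G.degree u : ℝ) ^ 2 + (G.degree v : ℝ) ^ 2) else 0


theorem somborIndex_eq_half {V : Type*} [Fintype V] [DecidableEq V]
    (G : SimpleGraph V) [DecidableRel G.Adj] :
    somborIndex G = (∑ u, ∑ v, if G.Adj u v then
      Real.sqrt ((G.degree u : ℝ) ^ 2 + (G.degree v : ℝ) ^ 2) else 0) / 2 := by
  classical
  set f : V → V → ℝ := fun u v => Real.sqrt ((G.degree u : ℝ) ^ 2 + (G.degree v : ℝ) ^ 2) with hf
  set F : Sym2 V → ℝ := Sym2.lift ⟨f, fun u v => by simp [hf, add_comm]⟩ with hF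
  have key1 : ∑ d : G.Dart, F d.edge = 2 * somborIndex G := by
    rw [← Finset.sum_fiberwise_of_maps_to (g := SimpleGraph.Dart.edge)
      (t := G.edgeFinset) (fun d _ => by simp [SimpleGraph.Dart.edge_mem])]
    rw [somborIndex, Finset.mul_sum]
    refine Finset.sum_congr rfl fun e he => ?_
    rw [Finset.sum_congr rfl (fun d hd => show F d.edge = F e by
        rw [(Finset.mem_filter.mp hd).2]), Finset.sum_const,
      G.dart_edge_fiber_card e (SimpleGraph.mem_edgeFinset.mp he)]
    simp [hF, two_mul, two_smul]
    rfl
  have key2 : ∑ d : G.Dart, F d.edge = ∑ u, ∑ v, if G.Adj u v then f u v else 0 := by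
    have e1 : (∑ p : V × V, if G.Adj p.1 p.2 then f p.1 p.2 else 0)
        = ∑ u, ∑ v, if G.Adj u v then f u v else 0 := Fintype.sum_prod_type _
    rw [← e1]
    rw [show (∑ p : V × V, if G.Adj p.1 p.2 then f p.1 p.2 else 0)
        = ∑ p ∈ univ.filter (fun p : V × V => G.Adj p.1 p.2), f p.1 p.2 from
      (Finset.sum_filter _ _).symm]
    refine Finset.sum_bij (fun d _ => d.toProd) (fun d _ => by simp [d.adj]) ?_ ?_ ?_
    · intro a ha b hb h; exact SimpleGraph.Dart.toProd_injective h
    · intro p hp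
      exact ⟨⟨p, (Finset.mem_filter.mp hp).2⟩, Finset.mem_univ _, rfl⟩
    · intro d _; rfl
  rw [eq_div_iff (by norm_num : (2:ℝ) ≠ 0)]
  rw [← key2, key1, mul_comm]

lemma splittingGraph_adj' {V : Type*} (G : SimpleGraph V) (m : ℕ)
    (p q : V × Fin (m + 1)) :
    (splittingGraph G m).Adj p q ↔ G.Adj p.1 q.1 ∧ (p.2 = 0 ∨ q.2 = 0) := Iff.rfl

lemma splitting_top_degree (n m : ℕ) (p : Fin n × Fin (m + 1)) :
    (splittingGraph (⊤ : SimpleGraph (Fin n)) m).degree p =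
      if p.2 = 0 then (n - 1) * (m + 1) else n - 1 := by
  classical
  rw [SimpleGraph.degree, SimpleGraph.neighborFinset_eq_filter]
  by_cases hp : p.2 = 0
  · rw [if_pos hp]
    have h : (univ.filter ((splittingGraph (⊤ : SimpleGraph (Fin n)) m).Adj p))
        = (univ.erase p.1) ×ˢ univ := by
      ext q
      simp only [splittingGraph_adj', Finset.mem_product, Finset.mem_filter, Finset.mem_univ,
        Finset.mem_erase, Finset.mem_singleton, true_and, SimpleGraph.top_adj, hp,
        false_or, and_true, ne_eq]
      tauto
    rw [h, Finset.card_product, Finset.card_erase_of_mem (mem_univ _)]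
    simp
  · rw [if_neg hp]
    have h : (univ.filter ((splittingGraph (⊤ : SimpleGraph (Fin n)) m).Adj p))
        = (univ.erase p.1) ×ˢ {0} := by
      ext q
      simp only [splittingGraph_adj', Finset.mem_product, Finset.mem_filter, Finset.mem_univ,
        Finset.mem_erase, Finset.mem_singleton, true_and, SimpleGraph.top_adj, hp,
        false_or, and_true, ne_eq]
      tauto
    rw [h, Finset.card_product, Finset.card_erase_of_mem (mem_univ _)]
    simp

theorem sombor_index_splitting_complete (n m : ℕ) :
    somborIndex (splittingGraph (⊤ : SimpleGraph (Fin n)) m) =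
      ((n : ℝ) * ((n : ℝ) - 1) ^ 2 / Real.sqrt 2) *
        ((m : ℝ) * Real.sqrt (2 * (m : ℝ) ^ 2 + 4 * m + 4) + (m + 1)) := by
  rcases Nat.eq_zero_or_pos n with hn | hn
  · subst hn
    rw [somborIndex_eq_half]
    simp
  obtain ⟨N, rfl⟩ : ∃ N, n = N + 1 := ⟨n - 1, (Nat.succ_pred_eq_of_pos hn).symm⟩
  rw [somborIndex_eq_half]
  set w : Fin (m + 1) → ℝ := fun i => if i = 0 then (N : ℝ) * (m + 1) else (N : ℝ) with hw
  have hdeg : ∀ p : Fin (N + 1) × Fin (m + 1),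
      ((splittingGraph (⊤ : SimpleGraph (Fin (N + 1))) m).degree p : ℝ) = w p.2 := by
    intro p
    rw [splitting_top_degree]
    by_cases hp : p.2 = 0 <;> simp [hp, hw] <;> push_cast <;> ring
  set x : ℝ := Real.sqrt ((m : ℝ) ^ 2 + 2 * m + 2) with hx
  have hxnn : (0:ℝ) ≤ (m : ℝ) ^ 2 + 2 * m + 2 := by positivity
  -- the inner double sum over Fin (m+1)
  set C : ℝ := Real.sqrt 2 * ((N : ℝ) * (m + 1)) + 2 * m * ((N : ℝ) * x) with hC
  have hab : Real.sqrt (w 0 ^ 2 + (N : ℝ) ^ 2) = (N : ℝ) * x := by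
    have h1 : w 0 ^ 2 + (N : ℝ) ^ 2 = (N : ℝ) ^ 2 * ((m : ℝ) ^ 2 + 2 * m + 2) := by
      simp [hw]; ring
    rw [h1, Real.sqrt_mul (sq_nonneg _), Real.sqrt_sq (Nat.cast_nonneg N), hx]
  have haa : Real.sqrt (w 0 ^ 2 + w 0 ^ 2) = Real.sqrt 2 * ((N : ℝ) * (m + 1)) := by
    have h1 : w 0 ^ 2 + w 0 ^ 2 = 2 * ((N : ℝ) * (m + 1)) ^ 2 := by simp [hw]; ring
    rw [h1, Real.sqrt_mul (by norm_num), Real.sqrt_sq (by positivity)]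
  have hCval : ∑ i : Fin (m + 1), ∑ j : Fin (m + 1),
      (if i = 0 ∨ j = 0 then Real.sqrt (w i ^ 2 + w j ^ 2) else 0) = C := by
    rw [Fin.sum_univ_succ]
    have h0 : ∑ j : Fin (m + 1), (if (0 : Fin (m+1)) = 0 ∨ j = 0
        then Real.sqrt (w 0 ^ 2 + w j ^ 2) else 0)
        = Real.sqrt 2 * ((N : ℝ) * (m + 1)) + m * ((N : ℝ) * x) := by
      simp only [eq_self_iff_true, true_or, if_true]
      rw [Fin.sum_univ_succ, haa]
      have : ∀ j : Fin m, Real.sqrt (w 0 ^ 2 + w j.succ ^ 2) = (N : ℝ) * x := by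
        intro j
        have : w j.succ = (N : ℝ) := by simp [hw, Fin.succ_ne_zero]
        rw [this, ← hab]
      rw [Finset.sum_congr rfl fun j _ => this j, Finset.sum_const, Finset.card_univ,
        Fintype.card_fin, nsmul_eq_mul]
    have h1 : ∀ i : Fin m, ∑ j : Fin (m + 1), (if i.succ = 0 ∨ j = 0
        then Real.sqrt (w i.succ ^ 2 + w j ^ 2) else 0) = (N : ℝ) * x := by
      intro i
      have hs : ∀ j : Fin (m + 1), (if i.succ = 0 ∨ j = 0
          then Real.sqrt (w i.succ ^ 2 + w j ^ 2) else 0)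
          = if j = 0 then Real.sqrt (w i.succ ^ 2 + w j ^ 2) else 0 := by
        intro j; simp [Fin.succ_ne_zero]
      rw [Finset.sum_congr rfl fun j _ => hs j, Finset.sum_ite_eq' univ 0
        (fun j => Real.sqrt (w i.succ ^ 2 + w j ^ 2)), if_pos (mem_univ _)]
      have h2 : w i.succ = (N : ℝ) := by simp [hw, Fin.succ_ne_zero]
      rw [h2, ← hab, add_comm]
    rw [h0, Finset.sum_congr rfl fun i _ => h1 i, Finset.sum_const, Finset.card_univ,
      Fintype.card_fin, nsmul_eq_mul, hC]
    ring
  have hmain : (∑ u, ∑ v, if (splittingGraph (⊤ : SimpleGraph (Fin (N+1))) m).Adj u v then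
      Real.sqrt (((splittingGraph (⊤ : SimpleGraph (Fin (N+1))) m).degree u : ℝ) ^ 2 +
        ((splittingGraph (⊤ : SimpleGraph (Fin (N+1))) m).degree v : ℝ) ^ 2) else 0)
      = (N + 1 : ℝ) * ((N : ℝ) * C) := by
    have e1 : ∀ g : Fin (N + 1) × Fin (m + 1) → ℝ, ∑ u, g u = ∑ a, ∑ i, g (a, i) :=
      fun g => Fintype.sum_prod_type g
    simp only [e1]
    simp only [splittingGraph_adj', SimpleGraph.top_adj, hdeg]
    have e2 : ∀ a : Fin (N + 1), ∑ i : Fin (m + 1), ∑ b : Fin (N + 1), ∑ j : Fin (m + 1),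
        (if ¬a = b ∧ (i = 0 ∨ j = 0) then Real.sqrt (w i ^ 2 + w j ^ 2) else 0)
        = (N : ℝ) * C := by
      intro a
      rw [Finset.sum_comm]
      have e3 : ∀ b : Fin (N + 1), ∑ i : Fin (m + 1), ∑ j : Fin (m + 1),
          (if ¬a = b ∧ (i = 0 ∨ j = 0) then Real.sqrt (w i ^ 2 + w j ^ 2) else 0)
          = if a = b then 0 else C := by
        intro b
        by_cases hb : a = b
        · simp [hb]
        · rw [if_neg hb, ← hCval]
          exact Finset.sum_congr rfl fun i _ => Finset.sum_congr rfl fun j _ => by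
            simp [hb]
      have e4 : ∀ b : Fin (N + 1), (if a = b then (0:ℝ) else C)
          = C - (if a = b then C else 0) := by
        intro b; by_cases h : a = b <;> simp [h]
      rw [Finset.sum_congr rfl fun b _ => e3 b, Finset.sum_congr rfl fun b _ => e4 b,
        Finset.sum_sub_distrib, Finset.sum_const, Finset.sum_ite_eq univ a fun _ => C,
        if_pos (mem_univ _), Finset.card_univ, Fintype.card_fin, nsmul_eq_mul]
      push_cast
      ring
    rw [Finset.sum_congr rfl fun a _ => e2 a, Finset.sum_const, Finset.card_univ,
      Fintype.card_fin, nsmul_eq_mul]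
    push_cast
    ring
  rw [hmain]
  -- final algebra
  have hs2 : Real.sqrt 2 * Real.sqrt 2 = 2 := Real.mul_self_sqrt (by norm_num)
  have hs2' : Real.sqrt 2 ≠ 0 := by positivity
  have hxx : Real.sqrt (2 * (m : ℝ) ^ 2 + 4 * m + 4) = Real.sqrt 2 * x := by
    rw [hx, ← Real.sqrt_mul (by norm_num : (0:ℝ) ≤ 2)]
    congr 1; ring
  rw [hxx, hC]
  push_cast
  rw [div_mul_eq_mul_div, div_eq_div_iff (by norm_num : (2:ℝ) ≠ 0) hs2']
  linear_combination ((N:ℝ) + 1) * (N:ℝ) ^ 2 * ((m:ℝ) + 1) * hs2
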